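/- Let c > 0, −2c²/9 < g ≤ 0 (so that c² + 4g > 0), ε ∈ {−1, 1}, and let k be a constant with c/2 < k < φ₀^+. Let I be an open interval containing 0 and let φ : I → ℝ be differentiable with φ(0) = k such that for every ξ ∈ I: c/2 < φ(ξ) < φ₀^+, φ(ξ)² + m₁φ(ξ) + m₂ > 0, 2√(φ(ξ)² + m₁φ(ξ) + m₂) + 2φ(ξ) + m₁ > 0, 2√(a₂)·√(φ(ξ)² + m₁φ(ξ) + m₂) + b₂φ(ξ) + m₃ > 0, and φ′(ξ) = ε·(φ(ξ) − φ₀^+)·√(φ(ξ)² + m₁φ(ξ) + m₂)/(2φ(ξ)). Then β₂(φ(ξ)) = β₂(k)·exp(εξ/2) for all ξ ∈ I. (The case ε = −1 is the kink-like wave solution φ₇ of equation (3.13), and ε = 1 is the antikink-like wave solution φ₈ of equation (3.14).) -/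

import Mathlib

private lemma osmosis_alg (x Q A α ε y φ0p m1 b2 m3 : ℝ)
    (hx : x ≠ 0) (hQ : Q ≠ 0) (hP : φ0p - x ≠ 0)
    (hN : 2*Q + 2*x + m1 ≠ 0) (hD : 2*A*Q + b2*x + m3 ≠ 0)
    (hy : y = ε*(x - φ0p)*Q/(2*x))
    (hαA : α*A = φ0p)
    (key : Q*(2*A*Q + b2*x + m3) + (φ0p - x)*(A*(2*x+m1)+b2*Q) = A*(2*A*Q + b2*x + m3)) :
    (2*((2*x+m1)*y/(2*Q))+2*y)/(2*Q + 2*x + m1) + α*(-y/(φ0p - x))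
      - α*((2*A*((2*x+m1)*y/(2*Q))+b2*y)/(2*A*Q + b2*x + m3)) = ε/2 := by
  have key2 : (φ0p - x)*(A*(2*x+m1)+b2*Q) = (A - Q)*(2*A*Q + b2*x + m3) := by
    linear_combination key
  have t1 : (2*((2*x+m1)*y/(2*Q))+2*y)/(2*Q + 2*x + m1) = y/Q := by
    rw [div_eq_iff hN]; field_simp; ring
  have t3 : (2*A*((2*x+m1)*y/(2*Q))+b2*y)/(2*A*Q + b2*x + m3)
      = y*(A-Q)/(Q*(φ0p - x)) := by
    rw [div_eq_div_iff hD (by exact mul_ne_zero hQ hP)]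
    field_simp
    linear_combination y*key2
  rw [t1, t3, hy]
  field_simp
  linear_combination (ε*(φ0p - x))*hαA

theorem osmosis_K22_kink_like_c_pos_g_nonpos
    (c g : ℝ) (hc : 0 < c) (hg1 : -2 * c ^ 2 / 9 < g) (hg2 : g ≤ 0)
    (ε : ℝ) (hε : ε = -1 ∨ ε = 1)
    (s φ0p m1 m2 m3 a2 b2 α2 : ℝ)
    (hs : s = Real.sqrt (c ^ 2 + 4 * g))
    (hφ0p : φ0p = (c + s) / 2)
    (hm1 : m1 = -(c - 3 * s) / 3)
    (hm2 : m2 = (c ^ 2 + 6 * g + c * s) / 6)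
    (hm3 : m3 = (2 / 3) * (c ^ 2 + 6 * g + c * s))
    (ha2 : a2 = c ^ 2 + 4 * g + c * s)
    (hb2 : b2 = (2 * c + 6 * s) / 3)
    (hα2 : α2 = (c + s) / (2 * Real.sqrt a2))
    (β₂ : ℝ → ℝ)
    (hβ₂ : ∀ x : ℝ, β₂ x =
      (2 * Real.sqrt (x ^ 2 + m1 * x + m2) + 2 * x + m1) * (φ0p - x) ^ α2 /
        (2 * Real.sqrt a2 * Real.sqrt (x ^ 2 + m1 * x + m2) + b2 * x + m3) ^ α2)
    (k : ℝ) (hk : c / 2 < k ∧ k < φ0p)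
    (I : Set ℝ) (hI : IsOpen I) (hIconv : Convex ℝ I) (h0I : (0:ℝ) ∈ I)
    (φ : ℝ → ℝ) (hφ0 : φ 0 = k)
    (hrange : ∀ ξ ∈ I, c / 2 < φ ξ ∧ φ ξ < φ0p)
    (hq : ∀ ξ ∈ I, 0 < (φ ξ) ^ 2 + m1 * φ ξ + m2)
    (hnum : ∀ ξ ∈ I, 0 < 2 * Real.sqrt ((φ ξ) ^ 2 + m1 * φ ξ + m2) + 2 * φ ξ + m1)
    (hden : ∀ ξ ∈ I,
      0 < 2 * Real.sqrt a2 * Real.sqrt ((φ ξ) ^ 2 + m1 * φ ξ + m2) + b2 * φ ξ + m3)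
    (horb : ∀ ξ ∈ I, HasDerivAt φ
      (ε * (φ ξ - φ0p) * Real.sqrt ((φ ξ) ^ 2 + m1 * φ ξ + m2) / (2 * φ ξ)) ξ) :
    ∀ ξ ∈ I, β₂ (φ ξ) = β₂ k * Real.exp (ε * ξ / 2) := by
  have hcg : 0 < c ^ 2 + 4 * g := by nlinarith
  have hs0 : 0 < s := by rw [hs]; exact Real.sqrt_pos.mpr hcg
  have hs2 : s ^ 2 = c ^ 2 + 4 * g := by rw [hs]; exact Real.sq_sqrt hcg.le
  have ha2pos : 0 < a2 := by rw [ha2]; nlinarith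
  set A := Real.sqrt a2 with hAdef
  have hA0 : 0 < A := Real.sqrt_pos.mpr ha2pos
  have hA2 : A ^ 2 = a2 := Real.sq_sqrt ha2pos.le
  have hαA : α2 * A = φ0p := by
    rw [hα2, hφ0p]; field_simp
  have hφ0ppos : 0 < φ0p := by rw [hφ0p]; linarith
  set L : ℝ → ℝ := fun t =>
    Real.log (2 * Real.sqrt ((φ t) ^ 2 + m1 * φ t + m2) + 2 * φ t + m1)
      + α2 * Real.log (φ0p - φ t)
      - α2 * Real.log (2 * A * Real.sqrt ((φ t) ^ 2 + m1 * φ t + m2) + b2 * φ t + m3)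
    with hLdef
  have hLt : ∀ t : ℝ, L t =
      Real.log (2 * Real.sqrt ((φ t) ^ 2 + m1 * φ t + m2) + 2 * φ t + m1)
      + α2 * Real.log (φ0p - φ t)
      - α2 * Real.log (2 * A * Real.sqrt ((φ t) ^ 2 + m1 * φ t + m2) + b2 * φ t + m3) := by
    intro t; rw [hLdef]
  have hβL : ∀ t ∈ I, β₂ (φ t) = Real.exp (L t) := by
    intro t ht
    have hqt := hq t ht
    have hNpos := hnum t ht
    have hDpos := hden t ht
    have hPpos : 0 < φ0p - φ t := sub_pos.mpr (hrange t ht).2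
    rw [hβ₂, hLt, Real.exp_sub, Real.exp_add, Real.exp_log hNpos,
      Real.rpow_def_of_pos hPpos, Real.rpow_def_of_pos hDpos,
      mul_comm (Real.log (φ0p - φ t)) α2,
      mul_comm (Real.log (2 * A * Real.sqrt ((φ t) ^ 2 + m1 * φ t + m2) + b2 * φ t + m3)) α2]
  have hLd : ∀ t ∈ I, HasDerivAt L (ε / 2) t := by
    intro t ht
    have hqt := hq t ht
    have hde := horb t ht
    set Q := Real.sqrt ((φ t) ^ 2 + m1 * φ t + m2) with hQdef
    have hQpos : 0 < Q := Real.sqrt_pos.mpr hqt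
    have hQ2 : Q ^ 2 = (φ t) ^ 2 + m1 * φ t + m2 := Real.sq_sqrt hqt.le
    have hNpos := hnum t ht
    have hDpos := hden t ht
    obtain ⟨hx1, hx2⟩ := hrange t ht
    have hxpos : 0 < φ t := by linarith
    have hPpos : 0 < φ0p - φ t := sub_pos.mpr hx2
    set y := ε * (φ t - φ0p) * Q / (2 * φ t) with hydef
    have hqd : HasDerivAt (fun u => (φ u) ^ 2 + m1 * φ u + m2) ((2 * φ t + m1) * y) t := by
      have h1 := hde.pow 2
      have h2 := hde.const_mul m1
      exact ((h1.add h2).add_const m2).congr_deriv (by norm_num; ring)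
    have hQd := hqd.sqrt hqt.ne'
    have hNd : HasDerivAt
        (fun u => 2 * Real.sqrt ((φ u) ^ 2 + m1 * φ u + m2) + 2 * φ u + m1)
        (2 * ((2 * φ t + m1) * y / (2 * Q)) + 2 * y) t :=
      ((hQd.const_mul 2).add (hde.const_mul 2)).add_const m1
    have hPd : HasDerivAt (fun u => φ0p - φ u) (-y) t := hde.const_sub φ0p
    have hDd : HasDerivAt
        (fun u => 2 * A * Real.sqrt ((φ u) ^ 2 + m1 * φ u + m2) + b2 * φ u + m3)
        (2 * A * ((2 * φ t + m1) * y / (2 * Q)) + b2 * y) t :=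
      ((hQd.const_mul (2 * A)).add (hde.const_mul b2)).add_const m3
    have hall : HasDerivAt L
        ((2 * ((2 * φ t + m1) * y / (2 * Q)) + 2 * y) / (2 * Q + 2 * φ t + m1)
          + α2 * (-y / (φ0p - φ t))
          - α2 * ((2 * A * ((2 * φ t + m1) * y / (2 * Q)) + b2 * y)
              / (2 * A * Q + b2 * φ t + m3))) t := by
      rw [hLdef]
      exact ((hNd.log hNpos.ne').add ((hPd.log hPpos.ne').const_mul α2)).sub
        ((hDd.log hDpos.ne').const_mul α2)
    have hQ2' : Q ^ 2 = (φ t) ^ 2 + (-(c - 3 * s) / 3) * (φ t)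
        + (c ^ 2 + 6 * g + c * s) / 6 := by rw [hQ2, hm1, hm2]
    have hA2' : A ^ 2 = c ^ 2 + 4 * g + c * s := by rw [hA2, ha2]
    have key : Q * (2 * A * Q + b2 * φ t + m3)
        + (φ0p - φ t) * (A * (2 * φ t + m1) + b2 * Q)
        = A * (2 * A * Q + b2 * φ t + m3) := by
      rw [hb2, hm3, hφ0p, hm1]
      linear_combination 2*A*hQ2' + (A/2 + Q)*hs2 - 2*Q*hA2'
    have e := osmosis_alg (φ t) Q A α2 ε y φ0p m1 b2 m3 hxpos.ne' hQpos.ne'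
      hPpos.ne' hNpos.ne' hDpos.ne' hydef hαA key
    rw [← e]
    exact hall
  have hG : ∀ t ∈ I, HasDerivAt (fun u => L u - ε / 2 * u) 0 t := by
    intro t ht
    have := (hLd t ht).sub ((hasDerivAt_id t).const_mul (ε / 2))
    exact this.congr_deriv (by ring)
  have hconst : ∀ t ∈ I, L t - ε / 2 * t = L 0 - ε / 2 * 0 := by
    intro t ht
    exact hIconv.is_const_of_fderivWithin_eq_zero
      (fun z hz => ((hG z hz).differentiableAt).differentiableWithinAt)
      (fun z hz => by
        rw [fderivWithin_of_isOpen hI hz]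
        exact ((hG z hz).hasFDerivAt).fderiv.trans (by ext; simp))
      ht h0I
  intro ξ hξ
  have h1 := hβL ξ hξ
  have h2 := hβL 0 h0I
  rw [hφ0] at h2
  have h3 := hconst ξ hξ
  rw [h1, h2, ← Real.exp_add]
  congr 1
  ring_nf at h3 ⊢
  linarith
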